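/- Let T be an ergodic measure-preserving automorphism of a standard probability space (Y, ν) that is approximately transitive, and let c > 0. Then the flow built under the constant ceiling function c with base T — i.e., the flow F_s on Y × [0, c) that translates the second coordinate modulo applications of T — is approximately transitive as an ℝ-action. -/

import Mathlib

open MeasureTheory Finset

noncomputable section ATProof
variable {Y : Type*} [MeasurableSpace Y]

/-- indicator of `[a,b)` as a real function -/
def ChiAT (a b t : ℝ) : ℝ := if a ≤ t ∧ t < b then 1 else 0

lemma ChiAT_nonneg (a b t : ℝ) : 0 ≤ ChiAT a b t := by
  unfold ChiAT; split_ifs <;> norm_num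

lemma ChiAT_le_one (a b t : ℝ) : ChiAT a b t ≤ 1 := by
  unfold ChiAT; split_ifs <;> norm_num

lemma ChiAT_eq_indicator (a b : ℝ) :
    ChiAT a b = Set.indicator (Set.Ico a b) (fun _ => (1:ℝ)) := by
  funext t
  simp [ChiAT, Set.indicator, Set.mem_Ico]

lemma ChiAT_measurable (a b : ℝ) : Measurable (ChiAT a b) := by
  rw [ChiAT_eq_indicator]
  exact (measurable_const.indicator measurableSet_Ico)

lemma ChiAT_integrable (a b c : ℝ) :
    Integrable (ChiAT a b) (volume.restrict (Set.Ico (0:ℝ) c)) := by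
  rw [ChiAT_eq_indicator]
  apply Integrable.indicator _ measurableSet_Ico
  exact integrable_const _

lemma ChiAT_eq_one {a b t : ℝ} (h : a ≤ t ∧ t < b) : ChiAT a b t = 1 := if_pos h
lemma ChiAT_eq_zero {a b t : ℝ} (h : ¬(a ≤ t ∧ t < b)) : ChiAT a b t = 0 := if_neg h

lemma ChiAT_integral_le' (a b c e : ℝ) (h : b - a ≤ e) (he : 0 ≤ e) :
    ∫ t, ChiAT a b t ∂(volume.restrict (Set.Ico (0:ℝ) c)) ≤ e := by
  rw [ChiAT_eq_indicator]
  have h1 : ∫ t, (Set.Ico a b).indicator (fun _ => (1:ℝ)) t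
        ∂(volume.restrict (Set.Ico (0:ℝ) c))
      = ((volume.restrict (Set.Ico (0:ℝ) c)) (Set.Ico a b)).toReal :=
    integral_indicator_one measurableSet_Ico
  rw [h1, Measure.restrict_apply measurableSet_Ico]
  have h2 : volume (Set.Ico a b ∩ Set.Ico 0 c) ≤ ENNReal.ofReal e := by
    refine le_trans (measure_mono Set.inter_subset_left) ?_
    rw [Real.volume_Ico]
    exact ENNReal.ofReal_le_ofReal h
  calc (volume (Set.Ico a b ∩ Set.Ico 0 c)).toReal
      ≤ (ENNReal.ofReal e).toReal := ENNReal.toReal_mono ENNReal.ofReal_ne_top h2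
    _ = e := ENNReal.toReal_ofReal he

lemma ChiAT_adjacent {x y z t : ℝ} (hxy : x ≤ y) (hyz : y ≤ z) :
    ChiAT x y t + ChiAT y z t = ChiAT x z t := by
  unfold ChiAT
  rcases lt_or_ge t y with h | h
  · have hB : ¬(y ≤ t ∧ t < z) := fun hb => absurd hb.1 (not_le.2 h)
    rw [if_neg hB, add_zero]
    have hiff : (x ≤ t ∧ t < y) ↔ (x ≤ t ∧ t < z) := by
      constructor <;> rintro ⟨u, v⟩ <;> exact ⟨u, by linarith⟩
    simp only [hiff]
  · have hA : ¬(x ≤ t ∧ t < y) := fun ha => absurd ha.2 (not_lt.2 h)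
    rw [if_neg hA, zero_add]
    have hiff : (y ≤ t ∧ t < z) ↔ (x ≤ t ∧ t < z) := by
      constructor <;> rintro ⟨u, v⟩ <;> exact ⟨by linarith, v⟩
    simp only [hiff]

/-- telescoping sum of consecutive interval indicators -/
lemma ChiAT_telescope (d : ℝ) (hd : 0 ≤ d) (M : ℕ) (t : ℝ) :
    ∑ i ∈ Finset.range M, ChiAT (i * d) ((i + 1) * d) t = ChiAT 0 (M * d) t := by
  induction M with
  | zero =>
    simp only [Finset.range_zero, Finset.sum_empty, Nat.cast_zero, zero_mul]
    unfold ChiAT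
    rw [if_neg]
    rintro ⟨h1, h2⟩; linarith
  | succ M ih =>
    rw [Finset.sum_range_succ, ih]
    push_cast
    exact ChiAT_adjacent (by positivity) (by nlinarith)

lemma ChiAT_telescope' (s d : ℝ) (hd : 0 ≤ d) (M : ℕ) (t : ℝ) :
    ∑ k ∈ Finset.range M, ChiAT (s + k * d) (s + (k + 1) * d) t = ChiAT s (s + M * d) t := by
  induction M with
  | zero =>
    simp only [Finset.range_zero, Finset.sum_empty, Nat.cast_zero, zero_mul, add_zero]
    unfold ChiAT
    rw [if_neg]
    rintro ⟨h1, h2⟩; linarith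
  | succ M ih =>
    rw [Finset.sum_range_succ, ih]
    push_cast
    exact ChiAT_adjacent (by nlinarith) (by nlinarith)

lemma ChiAT_diff_le {a₀ a' b₀ b' t : ℝ} (h1 : a₀ ≤ a') (h2 : b' ≤ b₀ ∨ b' ≤ a') :
    |ChiAT a₀ b₀ t - ChiAT a' b' t| ≤ ChiAT a₀ a' t + ChiAT b' b₀ t := by
  by_cases hB : a' ≤ t ∧ t < b'
  · have hA : a₀ ≤ t ∧ t < b₀ := by
      refine ⟨le_trans h1 hB.1, ?_⟩
      rcases h2 with h | h
      · linarith [hB.2]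
      · linarith [hB.1, hB.2]
    rw [ChiAT_eq_one hA, ChiAT_eq_one hB]
    simpa using add_nonneg (ChiAT_nonneg a₀ a' t) (ChiAT_nonneg b' b₀ t)
  · rw [ChiAT_eq_zero hB, sub_zero, abs_of_nonneg (ChiAT_nonneg _ _ _)]
    by_cases hA : a₀ ≤ t ∧ t < b₀
    · rw [ChiAT_eq_one hA]
      push_neg at hB
      rcases lt_or_ge t a' with h | h
      · have hC := ChiAT_eq_one ⟨hA.1, h⟩
        rw [hC]; linarith [ChiAT_nonneg b' b₀ t]
      · have hD := ChiAT_eq_one ⟨hB h, hA.2⟩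
        rw [hD]; linarith [ChiAT_nonneg a₀ a' t]
    · rw [ChiAT_eq_zero hA]
      exact add_nonneg (ChiAT_nonneg _ _ _) (ChiAT_nonneg _ _ _)

lemma ChiAT_clip {c : ℝ} (a b t : ℝ) (ht0 : 0 ≤ t) (htc : t < c) :
    ChiAT a b t = ChiAT (min (max a 0) c) (min (max b 0) c) t := by
  unfold ChiAT
  have h1 : (a ≤ t) ↔ (min (max a 0) c ≤ t) := by
    constructor
    · intro h
      exact le_trans (min_le_left _ _) (max_le h ht0)
    · intro h
      by_contra hcon
      push_neg at hcon
      have : t < min (max a 0) c := lt_min (lt_max_iff.2 (Or.inl hcon)) htc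
      linarith
  have h2 : (t < b) ↔ (t < min (max b 0) c) := by
    constructor
    · intro h
      exact lt_min (lt_max_iff.2 (Or.inl h)) htc
    · intro h
      rcases le_or_gt b 0 with hb | hb
      · have : min (max b 0) c ≤ 0 := le_trans (min_le_left _ _) (by simp [hb])
        linarith
      · have : min (max b 0) c ≤ b := le_trans (min_le_left _ _) (by simp [le_of_lt hb])
        linarith
  simp only [h1, h2]

instance finIco (c : ℝ) : IsFiniteMeasure (volume.restrict (Set.Ico (0:ℝ) c)) := by
  constructor
  rw [Measure.restrict_apply_univ, Real.volume_Ico]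
  exact ENNReal.ofReal_lt_top

/-- cell `i` of the uniform `N`-partition of `[0,c)` -/
def chiC (c : ℝ) (N i : ℕ) (t : ℝ) : ℝ := ChiAT (i * (c / N)) ((i + 1) * (c / N)) t

lemma chiC_nonneg (c : ℝ) (N i : ℕ) (t : ℝ) : 0 ≤ chiC c N i t := ChiAT_nonneg _ _ _

lemma chiC_sum (c : ℝ) {N : ℕ} (hN : 0 < N) (t : ℝ) :
    ∑ i : Fin N, chiC c N (i : ℕ) t = ChiAT 0 c t := by
  rw [Fin.sum_univ_eq_sum_range (fun i => chiC c N i t) N]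
  unfold chiC
  rcases le_or_gt 0 c with hc | hc
  · rw [ChiAT_telescope (c / N) (by positivity) N t]
    congr 1
    field_simp
  · have hd : c / N ≤ 0 := div_nonpos_of_nonpos_of_nonneg (le_of_lt hc) (Nat.cast_nonneg N)
    have h1 : ∀ i ∈ Finset.range N, ChiAT ((i:ℝ) * (c/N)) (((i:ℝ)+1) * (c/N)) t = 0 := by
      intro i _
      unfold ChiAT
      rw [if_neg]
      rintro ⟨ha, hb⟩
      nlinarith [Nat.cast_nonneg (α := ℝ) i]
    rw [Finset.sum_congr rfl h1, Finset.sum_const, smul_zero]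
    unfold ChiAT
    rw [if_neg]
    rintro ⟨ha, hb⟩; linarith

lemma chiC_split (c : ℝ) (hc : 0 ≤ c) {N M : ℕ} (hN : 0 < N) (hM : 0 < M) (i : ℕ) (t : ℝ) :
    ∑ k ∈ Finset.range M, chiC c (N * M) (k + M * i) t = chiC c N i t := by
  unfold chiC
  have key : ∀ k ∈ Finset.range M,
      ChiAT ((↑(k + M * i)) * (c / ↑(N * M))) ((↑(k + M * i) + 1) * (c / ↑(N * M))) t
        = ChiAT (((M:ℝ) * i * (c / (N * M))) + k * (c / (N * M)))
            (((M:ℝ) * i * (c / (N * M))) + (k + 1) * (c / (N * M))) t := by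
    intro k _
    congr 1 <;> push_cast <;> ring
  rw [Finset.sum_congr rfl key, ChiAT_telescope' _ _ (by positivity) M t]
  congr 1 <;> field_simp <;> ring

lemma chiC_ne_zero_eq_one {c : ℝ} {N i : ℕ} {t : ℝ} (h : chiC c N i t ≠ 0) :
    chiC c N i t = 1 := by
  unfold chiC ChiAT at *
  split_ifs at * <;> simp_all

lemma chiC_disjoint {c : ℝ} (hc : 0 ≤ c) {N i j : ℕ} (hij : i ≠ j) {t : ℝ}
    (hi : chiC c N i t ≠ 0) : chiC c N j t = 0 := by
  have hd : 0 ≤ c / N := div_nonneg hc (Nat.cast_nonneg N)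
  have hcond : (i:ℝ) * (c/N) ≤ t ∧ t < ((i:ℝ) + 1) * (c/N) := by
    by_contra hcon
    exact hi (by unfold chiC ChiAT; rw [if_neg hcon])
  unfold chiC ChiAT
  rw [if_neg]
  rintro ⟨h1, h2⟩
  rcases hij.lt_or_gt with h | h
  · have : ((i:ℝ) + 1) ≤ (j:ℝ) := by exact_mod_cast h
    nlinarith [hcond.1, hcond.2]
  · have : ((j:ℝ) + 1) ≤ (i:ℝ) := by exact_mod_cast h
    nlinarith [hcond.1, hcond.2]

/-- step functions over the uniform `N`-partition -/
def stepAT (c : ℝ) (N : ℕ) (v : Fin N → Y → ℝ) : Y × ℝ → ℝ :=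
  fun p => ∑ i : Fin N, v i p.1 * chiC c N (i : ℕ) p.2

lemma stepAT_integrable (ν : Measure Y) [IsFiniteMeasure ν] (c : ℝ) (N : ℕ)
    (v : Fin N → Y → ℝ) (hv : ∀ i, Integrable (v i) ν) :
    Integrable (stepAT c N v) (ν.prod (volume.restrict (Set.Ico (0:ℝ) c))) := by
  unfold stepAT
  apply integrable_finset_sum
  intro i _
  exact (hv i).mul_prod (ChiAT_integrable _ _ c)

lemma stepAT_max (c : ℝ) (hc : 0 ≤ c) (N : ℕ) (v : Fin N → Y → ℝ) (y : Y) (t : ℝ) :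
    ∑ i : Fin N, max (v i y) 0 * chiC c N (i : ℕ) t
      = max (∑ i : Fin N, v i y * chiC c N (i : ℕ) t) 0 := by
  by_cases h : ∃ i₀ : Fin N, chiC c N (i₀ : ℕ) t ≠ 0
  · obtain ⟨i₀, hi₀⟩ := h
    have hval := chiC_ne_zero_eq_one hi₀
    have hz : ∀ j : Fin N, j ≠ i₀ → chiC c N (j : ℕ) t = 0 := by
      intro j hj
      exact chiC_disjoint hc (fun hh => hj (Fin.val_injective hh).symm) hi₀
    rw [Finset.sum_eq_single i₀ (fun b _ hb => by rw [hz b hb, mul_zero])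
          (fun hmem => absurd (Finset.mem_univ i₀) hmem),
        Finset.sum_eq_single i₀ (fun b _ hb => by rw [hz b hb, mul_zero])
          (fun hmem => absurd (Finset.mem_univ i₀) hmem),
        hval, mul_one, mul_one]
  · push_neg at h
    rw [Finset.sum_eq_zero fun i _ => by rw [h i, mul_zero],
        Finset.sum_eq_zero fun i _ => by rw [h i, mul_zero]]
    simp

lemma stepAT_refine (c : ℝ) (hc : 0 ≤ c) {N K : ℕ} (hN : 0 < N) {M : ℕ} (hM : 0 < M)
    (hK : K = N * M) (v : Fin N → Y → ℝ) :
    ∃ v' : Fin K → Y → ℝ, (∀ j, ∃ i, v' j = v i) ∧ stepAT c K v' = stepAT c N v := by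
  subst hK
  refine ⟨fun j => v j.divNat, fun j => ⟨j.divNat, rfl⟩, ?_⟩
  funext p
  unfold stepAT
  rw [← Equiv.sum_comp finProdFinEquiv
    (fun j : Fin (N * M) => v j.divNat p.1 * chiC c (N * M) (j : ℕ) p.2), Fintype.sum_prod_type]
  refine Finset.sum_congr rfl fun i _ => ?_
  have hdiv : ∀ k : Fin M, (finProdFinEquiv (i, k)).divNat = i := by
    intro k
    exact congrArg Prod.fst (finProdFinEquiv.symm_apply_apply (i, k))
  have hval : ∀ k : Fin M, ((finProdFinEquiv (i, k) : Fin (N*M)) : ℕ) = (k : ℕ) + M * (i : ℕ) :=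
    fun k => rfl
  calc ∑ k : Fin M, v (finProdFinEquiv (i, k)).divNat p.1
          * chiC c (N * M) ((finProdFinEquiv (i, k) : Fin (N*M)) : ℕ) p.2
      = ∑ k : Fin M, v i p.1 * chiC c (N * M) ((k : ℕ) + M * (i : ℕ)) p.2 := by
        refine Finset.sum_congr rfl fun k _ => ?_
        rw [hdiv k, hval k]
    _ = v i p.1 * ∑ k : Fin M, chiC c (N * M) ((k : ℕ) + M * (i : ℕ)) p.2 := by
        rw [Finset.mul_sum]
    _ = v i p.1 * chiC c N (i : ℕ) p.2 := by
        rw [Fin.sum_univ_eq_sum_range (fun k => chiC c (N * M) (k + M * (i : ℕ)) p.2) M,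
          chiC_split c hc hN hM]

/-- the approximation property: `f` is within any `δ` in `L¹` of a step function -/
def ApxAT (ν : Measure Y) (c : ℝ) (f : Y × ℝ → ℝ) : Prop :=
  Integrable f (ν.prod (volume.restrict (Set.Ico (0:ℝ) c))) ∧
  ∀ δ > (0:ℝ), ∃ N, 0 < N ∧ ∃ v : Fin N → Y → ℝ, (∀ i, Integrable (v i) ν) ∧
    ∫ p, |f p - stepAT c N v p| ∂(ν.prod (volume.restrict (Set.Ico (0:ℝ) c))) ≤ δ

variable {ν : Measure Y} [IsFiniteMeasure ν] {c : ℝ}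

lemma triAT {X : Type*} [MeasurableSpace X] {μ : Measure X} {a b d : X → ℝ}
    (hab : Integrable (fun x => a x - b x) μ) (hbd : Integrable (fun x => b x - d x) μ) :
    ∫ x, |a x - d x| ∂μ ≤ (∫ x, |a x - b x| ∂μ) + ∫ x, |b x - d x| ∂μ := by
  rw [← integral_add hab.abs hbd.abs]
  refine integral_mono_of_nonneg (ae_of_all _ fun x => abs_nonneg _) (hab.abs.add hbd.abs)
    (ae_of_all _ fun x => ?_)
  simpa using abs_sub_le (a x) (b x) (d x)

lemma ApxAT.zero : ApxAT ν c (fun _ => (0:ℝ)) := by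
  refine ⟨integrable_zero _ _ _, fun δ hδ => ⟨1, one_pos, fun _ _ => 0, fun i => integrable_zero _ _ _, ?_⟩⟩
  have : ∀ p : Y × ℝ, |(0:ℝ) - stepAT c 1 (fun _ _ => (0:ℝ)) p| = 0 := by
    intro p; simp [stepAT]
  rw [integral_congr_ae (ae_of_all _ this), integral_zero]
  exact le_of_lt hδ

lemma ApxAT.add {f g : Y × ℝ → ℝ} (hc : 0 ≤ c) (hf : ApxAT ν c f) (hg : ApxAT ν c g) :
    ApxAT ν c (fun p => f p + g p) := by
  obtain ⟨hfi, hfa⟩ := hf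
  obtain ⟨hgi, hga⟩ := hg
  refine ⟨hfi.add hgi, fun δ hδ => ?_⟩
  obtain ⟨N₁, hN₁, v, hvint, hv⟩ := hfa (δ/2) (by linarith)
  obtain ⟨N₂, hN₂, w, hwint, hw⟩ := hga (δ/2) (by linarith)
  obtain ⟨v', hv', hvs⟩ := stepAT_refine c hc hN₁ hN₂ rfl v
  obtain ⟨w', hw', hws⟩ := stepAT_refine c hc hN₂ hN₁ (mul_comm N₁ N₂) w
  refine ⟨N₁ * N₂, Nat.mul_pos hN₁ hN₂, fun j y => v' j y + w' j y, ?_, ?_⟩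
  · intro i
    obtain ⟨i₁, hi₁⟩ := hv' i
    obtain ⟨i₂, hi₂⟩ := hw' i
    have : (fun j y => v' j y + w' j y) i = fun y => v i₁ y + w i₂ y := by
      funext y
      show v' i y + w' i y = v i₁ y + w i₂ y
      rw [hi₁, hi₂]
    rw [this]
    exact (hvint i₁).add (hwint i₂)
  · have hsplit : stepAT c (N₁*N₂) (fun j y => v' j y + w' j y)
        = fun p => stepAT c (N₁*N₂) v' p + stepAT c (N₁*N₂) w' p := by
      funext p
      unfold stepAT
      rw [← Finset.sum_add_distrib]
      exact Finset.sum_congr rfl fun i _ => by ring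
    rw [hsplit, hvs, hws]
    have hptwise : ∀ p, |f p + g p - (stepAT c N₁ v p + stepAT c N₂ w p)|
        ≤ |f p - stepAT c N₁ v p| + |g p - stepAT c N₂ w p| := by
      intro p
      have := abs_add_le (f p - stepAT c N₁ v p) (g p - stepAT c N₂ w p)
      calc |f p + g p - (stepAT c N₁ v p + stepAT c N₂ w p)|
          = |(f p - stepAT c N₁ v p) + (g p - stepAT c N₂ w p)| := by ring_nf
        _ ≤ _ := this
    have hint1 : Integrable (fun p => f p - stepAT c N₁ v p)
        (ν.prod (volume.restrict (Set.Ico (0:ℝ) c))) :=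
      hfi.sub (stepAT_integrable ν c N₁ v hvint)
    have hint2 : Integrable (fun p => g p - stepAT c N₂ w p)
        (ν.prod (volume.restrict (Set.Ico (0:ℝ) c))) :=
      hgi.sub (stepAT_integrable ν c N₂ w hwint)
    calc ∫ p, |f p + g p - (stepAT c N₁ v p + stepAT c N₂ w p)|
            ∂(ν.prod (volume.restrict (Set.Ico (0:ℝ) c)))
        ≤ ∫ p, (|f p - stepAT c N₁ v p| + |g p - stepAT c N₂ w p|)
            ∂(ν.prod (volume.restrict (Set.Ico (0:ℝ) c))) := by
          refine integral_mono_of_nonneg (ae_of_all _ fun p => abs_nonneg _)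
            (hint1.abs.add hint2.abs) (ae_of_all _ hptwise)
      _ = (∫ p, |f p - stepAT c N₁ v p| ∂(ν.prod (volume.restrict (Set.Ico (0:ℝ) c))))
          + ∫ p, |g p - stepAT c N₂ w p| ∂(ν.prod (volume.restrict (Set.Ico (0:ℝ) c))) :=
          integral_add hint1.abs hint2.abs
      _ ≤ δ/2 + δ/2 := add_le_add hv hw
      _ = δ := by ring

lemma ApxAT.smul {f : Y × ℝ → ℝ} (hf : ApxAT ν c f) (k : ℝ) :
    ApxAT ν c (fun p => k * f p) := by
  obtain ⟨hfi, hfa⟩ := hf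
  refine ⟨hfi.const_mul k, fun δ hδ => ?_⟩
  have hk : 0 < |k| + 1 := by positivity
  obtain ⟨N, hN, v, hvint, hv⟩ := hfa (δ / (|k| + 1)) (by positivity)
  refine ⟨N, hN, fun i y => k * v i y, fun i => (hvint i).const_mul k, ?_⟩
  have hstep : stepAT c N (fun i y => k * v i y) = fun p => k * stepAT c N v p := by
    funext p
    unfold stepAT
    rw [Finset.mul_sum]
    exact Finset.sum_congr rfl fun i _ => by ring
  rw [hstep]
  have habs : ∀ p : Y × ℝ, |k * f p - k * stepAT c N v p| = |k| * |f p - stepAT c N v p| := by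
    intro p
    rw [← abs_mul]
    congr 1
    ring
  rw [integral_congr_ae (ae_of_all _ habs), integral_const_mul]
  calc |k| * ∫ p, |f p - stepAT c N v p| ∂(ν.prod (volume.restrict (Set.Ico (0:ℝ) c)))
      ≤ |k| * (δ / (|k| + 1)) := by
        refine mul_le_mul_of_nonneg_left hv (abs_nonneg k)
    _ = δ * (|k| / (|k| + 1)) := by ring
    _ ≤ δ * 1 := mul_le_mul_of_nonneg_left ((div_le_one hk).2 (by linarith)) (le_of_lt hδ)
    _ = δ := mul_one δ

lemma ApxAT.closure {f : Y × ℝ → ℝ}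
    (hfi : Integrable f (ν.prod (volume.restrict (Set.Ico (0:ℝ) c))))
    (h : ∀ δ > (0:ℝ), ∃ g, ApxAT ν c g ∧
      ∫ p, |f p - g p| ∂(ν.prod (volume.restrict (Set.Ico (0:ℝ) c))) ≤ δ) :
    ApxAT ν c f := by
  refine ⟨hfi, fun δ hδ => ?_⟩
  obtain ⟨g, ⟨hgi, hga⟩, hfg⟩ := h (δ/2) (by linarith)
  obtain ⟨N, hN, v, hvint, hv⟩ := hga (δ/2) (by linarith)
  refine ⟨N, hN, v, hvint, ?_⟩
  calc ∫ p, |f p - stepAT c N v p| ∂(ν.prod (volume.restrict (Set.Ico (0:ℝ) c)))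
      ≤ (∫ p, |f p - g p| ∂(ν.prod (volume.restrict (Set.Ico (0:ℝ) c))))
        + ∫ p, |g p - stepAT c N v p| ∂(ν.prod (volume.restrict (Set.Ico (0:ℝ) c))) :=
        triAT (hfi.sub hgi) (hgi.sub (stepAT_integrable ν c N v hvint))
    _ ≤ δ/2 + δ/2 := add_le_add hfg hv
    _ = δ := by ring

lemma ApxAT.sum {ι : Type*} (hc : 0 ≤ c) (s : Finset ι) (g : ι → Y × ℝ → ℝ)
    (h : ∀ n ∈ s, ApxAT ν c (g n)) : ApxAT ν c (fun p => ∑ n ∈ s, g n p) := by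
  classical
  induction s using Finset.induction_on with
  | empty => simpa using (ApxAT.zero (ν := ν) (c := c))
  | insert a s' hmem ih =>
    have : (fun p => ∑ n ∈ insert a s', g n p) = fun p => g a p + ∑ n ∈ s', g n p := by
      funext p
      exact Finset.sum_insert hmem
    rw [this]
    exact ApxAT.add hc (h a (Finset.mem_insert_self a s'))
      (ih fun n hn => h n (Finset.mem_insert_of_mem hn))

lemma stepAT_grid_sum (c : ℝ) (hc : 0 ≤ c) {N : ℕ} (hN : 0 < N) {k : ℕ} (hk : k ≤ N) (t : ℝ) :
    ∑ i : Fin N, (if (i : ℕ) < k then (1:ℝ) else 0) * chiC c N (i : ℕ) t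
      = ChiAT 0 ((k : ℝ) * (c / N)) t := by
  rw [Fin.sum_univ_eq_sum_range (fun i => (if i < k then (1:ℝ) else 0) * chiC c N i t) N]
  have e1 : ∑ i ∈ Finset.range N, (if i < k then (1:ℝ) else 0) * chiC c N i t
      = ∑ i ∈ Finset.range k, (if i < k then (1:ℝ) else 0) * chiC c N i t := by
    refine (Finset.sum_subset (Finset.range_subset_range.2 hk) fun x _ hx => ?_).symm
    rw [if_neg (by simpa using hx), zero_mul]
  rw [e1]
  have e2 : ∑ i ∈ Finset.range k, (if i < k then (1:ℝ) else 0) * chiC c N i t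
      = ∑ i ∈ Finset.range k, ChiAT (i * (c/N)) ((i + 1) * (c/N)) t := by
    refine Finset.sum_congr rfl fun i hi => ?_
    rw [if_pos (Finset.mem_range.1 hi), one_mul]
    rfl
  rw [e2, ChiAT_telescope (c/N) (by positivity) k t]

lemma stepAT_grid_sum₂ (c : ℝ) (hc : 0 ≤ c) {N : ℕ} (hN : 0 < N) {k₁ k₂ : ℕ}
    (hk₁₂ : k₁ ≤ k₂) (hk₂ : k₂ ≤ N) (t : ℝ) :
    ∑ i : Fin N, (if k₁ ≤ (i : ℕ) ∧ (i : ℕ) < k₂ then (1:ℝ) else 0) * chiC c N (i : ℕ) t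
      = ChiAT ((k₁ : ℝ) * (c / N)) ((k₂ : ℝ) * (c / N)) t := by
  have hβ : ∀ i : ℕ, (if k₁ ≤ i ∧ i < k₂ then (1:ℝ) else 0)
      = (if i < k₂ then (1:ℝ) else 0) - (if i < k₁ then (1:ℝ) else 0) := by
    intro i
    split_ifs <;> norm_num <;> omega
  have e1 : ∑ i : Fin N, (if k₁ ≤ (i : ℕ) ∧ (i : ℕ) < k₂ then (1:ℝ) else 0) * chiC c N (i:ℕ) t
      = (∑ i : Fin N, (if (i:ℕ) < k₂ then (1:ℝ) else 0) * chiC c N (i:ℕ) t)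
        - ∑ i : Fin N, (if (i:ℕ) < k₁ then (1:ℝ) else 0) * chiC c N (i:ℕ) t := by
    rw [← Finset.sum_sub_distrib]
    refine Finset.sum_congr rfl fun i _ => ?_
    rw [hβ (i : ℕ)]
    ring
  rw [e1, stepAT_grid_sum c hc hN hk₂ t, stepAT_grid_sum c hc hN (le_trans hk₁₂ hk₂) t]
  have h0 : (0:ℝ) ≤ (k₁ : ℝ) * (c/N) := by positivity
  have h12 : (k₁ : ℝ) * (c/N) ≤ (k₂ : ℝ) * (c/N) :=
    mul_le_mul_of_nonneg_right (by exact_mod_cast hk₁₂) (by positivity)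
  have := ChiAT_adjacent (t := t) h0 h12
  linarith

lemma aeIcoAT (ν : Measure Y) [IsFiniteMeasure ν] (c : ℝ) :
    ∀ᵐ p ∂(ν.prod (volume.restrict (Set.Ico (0:ℝ) c))), p.2 ∈ Set.Ico (0:ℝ) c := by
  rw [ae_iff]
  have hset : {p : Y × ℝ | ¬ p.2 ∈ Set.Ico (0:ℝ) c} = Set.univ ×ˢ (Set.Ico (0:ℝ) c)ᶜ := by
    ext p
    simp [Set.mem_prod]
  rw [hset, Measure.prod_prod, Measure.restrict_apply measurableSet_Ico.compl]
  simp

lemma indicator_prod_split (S : Set Y) (a b : ℝ) (p : Y × ℝ) :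
    Set.indicator (S ×ˢ Set.Ico a b) (fun _ => (1:ℝ)) p
      = Set.indicator S (fun _ => (1:ℝ)) p.1 * ChiAT a b p.2 := by
  rw [ChiAT_eq_indicator]
  by_cases h1 : p.1 ∈ S <;> by_cases h2 : p.2 ∈ Set.Ico a b <;>
    simp [Set.indicator, Set.mem_prod, h1, h2]

def rectV (S : Set Y) (k₁ k₂ N : ℕ) : Fin N → Y → ℝ :=
  fun i y => (if k₁ ≤ (i:ℕ) ∧ (i:ℕ) < k₂ then (1:ℝ) else 0)
    * Set.indicator S (fun _ => (1:ℝ)) y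

lemma rectV_int (ν : Measure Y) [IsFiniteMeasure ν] {S : Set Y} (hS : MeasurableSet S)
    (k₁ k₂ N : ℕ) : ∀ i, Integrable (rectV S k₁ k₂ N i) ν := fun _ =>
  ((integrable_const (1:ℝ)).indicator hS).const_mul _

lemma rectV_step {c : ℝ} (hc : 0 ≤ c) {N : ℕ} (hN : 0 < N) {k₁ k₂ : ℕ}
    (hk₁₂ : k₁ ≤ k₂) (hk₂N : k₂ ≤ N) (S : Set Y) (p : Y × ℝ) :
    stepAT c N (rectV S k₁ k₂ N) p
      = Set.indicator S (fun _ => (1:ℝ)) p.1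
        * ChiAT ((k₁:ℝ) * (c/N)) ((k₂:ℝ) * (c/N)) p.2 := by
  unfold stepAT rectV
  have e1 : ∀ i : Fin N,
      ((if k₁ ≤ (i:ℕ) ∧ (i:ℕ) < k₂ then (1:ℝ) else 0)
          * Set.indicator S (fun _ => (1:ℝ)) p.1) * chiC c N (i:ℕ) p.2
      = Set.indicator S (fun _ => (1:ℝ)) p.1
        * ((if k₁ ≤ (i:ℕ) ∧ (i:ℕ) < k₂ then (1:ℝ) else 0) * chiC c N (i:ℕ) p.2) :=
    fun i => by ring
  rw [Finset.sum_congr rfl fun i _ => e1 i, ← Finset.mul_sum,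
    stepAT_grid_sum₂ c hc hN hk₁₂ hk₂N p.2]

lemma chi_snd_integrable (ν : Measure Y) [IsFiniteMeasure ν] (a b c : ℝ) :
    Integrable (fun p : Y × ℝ => ChiAT a b p.2)
      (ν.prod (volume.restrict (Set.Ico (0:ℝ) c))) := by
  simpa using (integrable_const (1:ℝ)).mul_prod (ChiAT_integrable a b c)

lemma chi_snd_integral (ν : Measure Y) [IsProbabilityMeasure ν] (a b c : ℝ) :
    ∫ p : Y × ℝ, ChiAT a b p.2 ∂(ν.prod (volume.restrict (Set.Ico (0:ℝ) c)))
      = ∫ t, ChiAT a b t ∂(volume.restrict (Set.Ico (0:ℝ) c)) := by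
  have := integral_prod_mul (μ := ν) (ν := volume.restrict (Set.Ico (0:ℝ) c))
    (fun _ : Y => (1:ℝ)) (ChiAT a b)
  simpa using this

set_option maxHeartbeats 1000000 in
lemma apx_rect (ν : Measure Y) [IsProbabilityMeasure ν] {c : ℝ} (hc : 0 < c)
    {S : Set Y} (hS : MeasurableSet S) {a b : ℝ} (hab : a < b) :
    ApxAT ν c (Set.indicator (S ×ˢ Set.Ico a b) (fun _ => (1:ℝ))) := by
  constructor
  · exact (integrable_const (1:ℝ)).indicator (hS.prod measurableSet_Ico)
  intro δ hδ
  -- choose a fine grid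
  obtain ⟨n, hn⟩ := exists_nat_gt (2 * c / δ)
  set N : ℕ := n + 1 with hNdef
  have hN : 0 < N := Nat.succ_pos n
  have hNR : (0:ℝ) < N := by exact_mod_cast hN
  have hdN : (0:ℝ) ≤ c / N := by positivity
  have hgrid : 2 * (c / N) ≤ δ := by
    have h1 : 2 * c / δ < N := by
      have : (n:ℝ) ≤ N := by exact_mod_cast Nat.le_succ n
      linarith
    have h2 : 2 * c < δ * N := by
      rw [div_lt_iff₀ hδ] at h1
      linarith
    rw [mul_div_assoc'] at *
    rw [div_le_iff₀ hNR]
    linarith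
  -- clipped endpoints
  set a₀ : ℝ := min (max a 0) c with ha₀def
  set b₀ : ℝ := min (max b 0) c with hb₀def
  have ha₀0 : 0 ≤ a₀ := le_min (le_max_right a 0) hc.le
  have ha₀c : a₀ ≤ c := min_le_right _ _
  have hb₀0 : 0 ≤ b₀ := le_min (le_max_right b 0) hc.le
  have hb₀c : b₀ ≤ c := min_le_right _ _
  have hab₀ : a₀ ≤ b₀ := min_le_min (max_le_max hab.le (le_refl 0)) (le_refl c)
  -- grid points
  set x : ℝ := a₀ * N / c with hxdef
  set z : ℝ := b₀ * N / c with hzdef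
  have hx0 : 0 ≤ x := by positivity
  have hz0 : 0 ≤ z := by positivity
  set k₁ : ℕ := (⌈x⌉).toNat with hk₁def
  set k₂' : ℕ := (⌊z⌋).toNat with hk₂'def
  have hk₁cast : (k₁:ℝ) = ((⌈x⌉ : ℤ) : ℝ) := by
    rw [hk₁def]
    exact_mod_cast congrArg (Int.cast : ℤ → ℝ) (Int.toNat_of_nonneg (Int.ceil_nonneg hx0))
  have hk₂'cast : (k₂':ℝ) = ((⌊z⌋ : ℤ) : ℝ) := by
    rw [hk₂'def]
    exact_mod_cast congrArg (Int.cast : ℤ → ℝ) (Int.toNat_of_nonneg (Int.floor_nonneg.2 hz0))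
  have hxa : x * (c / N) = a₀ := by
    rw [hxdef]; field_simp
  have hzb : z * (c / N) = b₀ := by
    rw [hzdef]; field_simp
  set k₂ : ℕ := max k₁ k₂' with hk₂def
  set a' : ℝ := (k₁ : ℝ) * (c / N) with ha'def
  set b' : ℝ := (k₂ : ℝ) * (c / N) with hb'def
  have ha'low : a₀ ≤ a' := by
    rw [ha'def, hk₁cast, ← hxa]
    exact mul_le_mul_of_nonneg_right (Int.le_ceil x) hdN
  have ha'high : a' - a₀ ≤ c / N := by
    rw [ha'def, hk₁cast, ← hxa]
    have := Int.ceil_lt_add_one x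
    nlinarith [hdN]
  have hdpos : (0:ℝ) < c / N := by positivity
  have hxN : x ≤ (N:ℝ) := by
    rw [hxdef, div_le_iff₀ hc]
    nlinarith [mul_le_mul_of_nonneg_right ha₀c hNR.le]
  have hzN : z ≤ (N:ℝ) := by
    rw [hzdef, div_le_iff₀ hc]
    nlinarith [mul_le_mul_of_nonneg_right hb₀c hNR.le]
  have hk₁N : k₁ ≤ N := by
    rw [hk₁def, Int.toNat_le]
    exact Int.ceil_le.2 (by exact_mod_cast hxN)
  have hk₂'N : k₂' ≤ N := by
    rw [hk₂'def, Int.toNat_le]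
    have h1 : (⌊z⌋ : ℝ) ≤ (N:ℝ) := le_trans (Int.floor_le z) hzN
    exact_mod_cast h1
  have hk₂N : k₂ ≤ N := max_le hk₁N hk₂'N
  have hk₁₂ : k₁ ≤ k₂ := le_max_left _ _
  have hside : ((k₂:ℝ) * (c/N) ≤ b₀ ∨ (k₂:ℝ) * (c/N) ≤ a') ∧ b₀ - (k₂:ℝ) * (c/N) ≤ c / N := by
    rcases le_total k₂' k₁ with hcase | hcase
    · have hk₂k₁ : k₂ = k₁ := max_eq_left hcase
      have hb'a' : (k₂:ℝ) * (c/N) = a' := by rw [ha'def, hk₂k₁]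
      have hfloor : b₀ < ((k₂':ℝ) + 1) * (c / N) := by
        rw [hk₂'cast, ← hzb]
        have := Int.lt_floor_add_one z
        nlinarith
      have hmono : ((k₂':ℝ) + 1) ≤ ((k₁:ℝ) + 1) := by
        have h2 : (k₂':ℝ) ≤ k₁ := by exact_mod_cast hcase
        linarith
      refine ⟨Or.inr (le_of_eq hb'a'), ?_⟩
      have h3 : b₀ < ((k₁:ℝ) + 1) * (c / N) :=
        lt_of_lt_of_le hfloor (mul_le_mul_of_nonneg_right hmono hdN)
      rw [hb'a', ha'def]
      nlinarith
    · have hk₂k₂'' : k₂ = k₂' := max_eq_right hcase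
      have hk₂k₂' : (k₂:ℝ) = (k₂':ℝ) := by exact_mod_cast congrArg (Nat.cast : ℕ → ℝ) hk₂k₂''
      have hfl : (k₂':ℝ) * (c / N) ≤ b₀ := by
        rw [hk₂'cast, ← hzb]
        exact mul_le_mul_of_nonneg_right (Int.floor_le z) hdN
      have hfl2 : b₀ - c / N ≤ (k₂':ℝ) * (c / N) := by
        rw [hk₂'cast, ← hzb]
        have := Int.lt_floor_add_one z
        nlinarith
      rw [hk₂k₂']
      exact ⟨Or.inl hfl, by linarith⟩
  obtain ⟨hbor, hbb⟩ := hside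
  refine ⟨N, hN, rectV S k₁ k₂ N, rectV_int ν hS k₁ k₂ N, ?_⟩
  have hbound : ∀ᵐ p ∂(ν.prod (volume.restrict (Set.Ico (0:ℝ) c))),
      |Set.indicator (S ×ˢ Set.Ico a b) (fun _ => (1:ℝ)) p - stepAT c N (rectV S k₁ k₂ N) p|
        ≤ ChiAT a₀ a' p.2 + ChiAT ((k₂:ℝ) * (c/N)) b₀ p.2 := by
    filter_upwards [aeIcoAT ν c] with p hp
    rw [rectV_step hc.le hN hk₁₂ hk₂N S p, ← ha'def, indicator_prod_split,
      ChiAT_clip a b p.2 hp.1 hp.2, ← ha₀def, ← hb₀def,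
      ← mul_sub, abs_mul, abs_of_nonneg (Set.indicator_nonneg (fun _ _ => zero_le_one) p.1)]
    have hind1 : Set.indicator S (fun _ => (1:ℝ)) p.1 ≤ 1 := by
      by_cases h : p.1 ∈ S <;> simp [Set.indicator, h]
    calc Set.indicator S (fun _ => (1:ℝ)) p.1
          * |ChiAT a₀ b₀ p.2 - ChiAT a' ((k₂:ℝ) * (c/N)) p.2|
        ≤ |ChiAT a₀ b₀ p.2 - ChiAT a' ((k₂:ℝ) * (c/N)) p.2| :=
          mul_le_of_le_one_left (abs_nonneg _) hind1
      _ ≤ ChiAT a₀ a' p.2 + ChiAT ((k₂:ℝ) * (c/N)) b₀ p.2 := ChiAT_diff_le ha'low hbor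
  calc ∫ p, |Set.indicator (S ×ˢ Set.Ico a b) (fun _ => (1:ℝ)) p
            - stepAT c N (rectV S k₁ k₂ N) p|
          ∂(ν.prod (volume.restrict (Set.Ico (0:ℝ) c)))
      ≤ ∫ p, (ChiAT a₀ a' p.2 + ChiAT ((k₂:ℝ) * (c/N)) b₀ p.2)
          ∂(ν.prod (volume.restrict (Set.Ico (0:ℝ) c))) :=
        integral_mono_of_nonneg (ae_of_all _ fun p => abs_nonneg _)
          ((chi_snd_integrable ν a₀ a' c).add (chi_snd_integrable ν _ b₀ c)) hbound
    _ = (∫ p : Y × ℝ, ChiAT a₀ a' p.2 ∂(ν.prod (volume.restrict (Set.Ico (0:ℝ) c))))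
        + ∫ p : Y × ℝ, ChiAT ((k₂:ℝ) * (c/N)) b₀ p.2
            ∂(ν.prod (volume.restrict (Set.Ico (0:ℝ) c))) :=
        integral_add (chi_snd_integrable ν a₀ a' c) (chi_snd_integrable ν _ b₀ c)
    _ ≤ c / N + c / N := by
        rw [chi_snd_integral ν a₀ a' c, chi_snd_integral ν _ b₀ c]
        exact add_le_add (ChiAT_integral_le' a₀ a' c (c/N) (by linarith) hdN)
          (ChiAT_integral_le' _ b₀ c (c/N) (by linarith) hdN)
    _ ≤ δ := by linarith

lemma ApxAT.one (ν : Measure Y) [IsFiniteMeasure ν] {c : ℝ} (hc : 0 < c) :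
    ApxAT ν c (fun _ => (1:ℝ)) := by
  refine ⟨integrable_const _, fun δ hδ => ⟨1, one_pos, fun _ _ => 1,
    fun _ => integrable_const _, ?_⟩⟩
  have hae : ∀ᵐ p ∂(ν.prod (volume.restrict (Set.Ico (0:ℝ) c))),
      |(1:ℝ) - stepAT c 1 (fun _ _ => (1:ℝ)) p| = 0 := by
    filter_upwards [aeIcoAT ν c] with p hp
    have hstep : stepAT c 1 (fun _ _ => (1:ℝ)) p = chiC c 1 0 p.2 := by
      unfold stepAT
      simp
    have hone : chiC c 1 0 p.2 = 1 := by
      unfold chiC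
      apply ChiAT_eq_one
      push_cast
      constructor
      · simpa using hp.1
      · simpa using hp.2
    rw [hstep, hone]
    simp
  rw [integral_congr_ae hae, integral_zero]
  exact le_of_lt hδ

lemma apx_indicator_compl (ν : Measure Y) [IsFiniteMeasure ν] {c : ℝ} (hc : 0 < c)
    {A : Set (Y × ℝ)}
    (h : ApxAT ν c (Set.indicator A (fun _ => (1:ℝ)))) :
    ApxAT ν c (Set.indicator Aᶜ (fun _ => (1:ℝ))) := by
  have heq : Set.indicator Aᶜ (fun _ => (1:ℝ))
      = fun p => (fun _ => (1:ℝ)) p + (-1) * Set.indicator A (fun _ => (1:ℝ)) p := by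
    funext p
    by_cases hp : p ∈ A <;> simp [hp]
  rw [heq]
  exact (ApxAT.one ν hc).add hc.le (h.smul (-1))

lemma apx_indicator_iUnion (ν : Measure Y) [IsFiniteMeasure ν] {c : ℝ} (hc : 0 < c)
    (A : ℕ → Set (Y × ℝ)) (hdisj : Pairwise (Function.onFun Disjoint A))
    (hmeas : ∀ n, MeasurableSet (A n))
    (hA : ∀ n, ApxAT ν c (Set.indicator (A n) (fun _ => (1:ℝ)))) :
    ApxAT ν c (Set.indicator (⋃ n, A n) (fun _ => (1:ℝ))) := by
  have hUmeas : MeasurableSet (⋃ n, A n) := MeasurableSet.iUnion hmeas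
  refine ApxAT.closure ((integrable_const (1:ℝ)).indicator hUmeas) (fun δ hδ => ?_)
  set U := ⋃ n, A n with hUdef
  set E : ℕ → Set (Y × ℝ) := fun M => U \ ⋃ n ∈ Finset.range M, A n with hEdef
  have hEmeas : ∀ M, MeasurableSet (E M) := fun M =>
    hUmeas.diff (Finset.measurableSet_biUnion _ (fun n _ => hmeas n))
  have hanti : Antitone E := by
    intro M₁ M₂ hM
    apply Set.diff_subset_diff_right
    intro x hx
    simp only [Set.mem_iUnion] at hx ⊢
    obtain ⟨n, hn, hxn⟩ := hx
    exact ⟨n, Finset.mem_range.2 (lt_of_lt_of_le (Finset.mem_range.1 hn) hM), hxn⟩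
  have hinter : ⋂ M, E M = ∅ := by
    ext p
    simp only [Set.mem_iInter, Set.mem_empty_iff_false, iff_false]
    intro hcon
    obtain ⟨hU, -⟩ := hcon 0
    obtain ⟨n, hn⟩ := Set.mem_iUnion.1 hU
    exact (hcon (n+1)).2 (Set.mem_biUnion (Finset.self_mem_range_succ n) hn)
  have htend : Filter.Tendsto (fun M => (ν.prod (volume.restrict (Set.Ico (0:ℝ) c))) (E M))
      Filter.atTop (nhds 0) := by
    have := tendsto_measure_iInter_atTop (μ := ν.prod (volume.restrict (Set.Ico (0:ℝ) c)))
      (fun M => (hEmeas M).nullMeasurableSet) hanti ⟨0, measure_ne_top _ _⟩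
    rw [hinter] at this
    simp only [measure_empty] at this
    exact this
  have hev : ∃ M, (ν.prod (volume.restrict (Set.Ico (0:ℝ) c))) (E M) < ENNReal.ofReal δ := by
    have := htend.eventually (gt_mem_nhds (ENNReal.ofReal_pos.2 hδ))
    exact this.exists
  obtain ⟨M, hM⟩ := hev
  refine ⟨fun p => ∑ n ∈ Finset.range M, Set.indicator (A n) (fun _ => (1:ℝ)) p,
    ApxAT.sum hc.le _ _ (fun n _ => hA n), ?_⟩
  set V := ⋃ n ∈ Finset.range M, A n with hVdef
  have hgV : ∀ p, ∑ n ∈ Finset.range M, Set.indicator (A n) (fun _ => (1:ℝ)) p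
      = Set.indicator V (fun _ => (1:ℝ)) p := by
    intro p
    by_cases hp : p ∈ V
    · obtain ⟨n₀, hn₀, hpn₀⟩ := Set.mem_iUnion₂.1 hp
      have hz : ∀ m ∈ Finset.range M, m ≠ n₀ → Set.indicator (A m) (fun _ => (1:ℝ)) p = 0 := by
        intro m _ hm
        have : p ∉ A m := fun hpm => Set.disjoint_left.1 (hdisj hm) hpm hpn₀
        simp [Set.indicator, this]
      rw [Finset.sum_eq_single n₀ hz (fun hmem => absurd hn₀ hmem)]
      simp [Set.indicator, hpn₀, hp]
    · have hz : ∀ m ∈ Finset.range M, Set.indicator (A m) (fun _ => (1:ℝ)) p = 0 := by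
        intro m hm
        have : p ∉ A m := fun hpm => hp (Set.mem_biUnion hm hpm)
        simp [Set.indicator, this]
      rw [Finset.sum_eq_zero hz]
      simp [Set.indicator, hp]
  have hVU : V ⊆ U := by
    intro p hp
    obtain ⟨n, -, hn⟩ := Set.mem_iUnion₂.1 hp
    exact Set.mem_iUnion.2 ⟨n, hn⟩
  have hdiffeq : ∀ p, |Set.indicator U (fun _ => (1:ℝ)) p
      - ∑ n ∈ Finset.range M, Set.indicator (A n) (fun _ => (1:ℝ)) p|
      = Set.indicator (E M) (1 : Y × ℝ → ℝ) p := by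
    intro p
    rw [hgV p]
    by_cases hpV : p ∈ V
    · have hpU : p ∈ U := hVU hpV
      have hpE : p ∉ E M := fun hE => hE.2 hpV
      simp [Set.indicator, hpV, hpU, hpE]
    · by_cases hpU : p ∈ U
      · have hpE : p ∈ E M := ⟨hpU, hpV⟩
        simp [Set.indicator, hpV, hpU, hpE]
      · have hpE : p ∉ E M := fun hE => hpU hE.1
        simp [Set.indicator, hpV, hpU, hpE]

  rw [integral_congr_ae (ae_of_all _ hdiffeq), integral_indicator_one (hEmeas M)]
  exact ENNReal.toReal_le_of_le_ofReal hδ.le hM.le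

lemma apx_indicator (ν : Measure Y) [IsProbabilityMeasure ν] {c : ℝ} (hc : 0 < c)
    {A : Set (Y × ℝ)} (hA : MeasurableSet A) :
    ApxAT ν c (Set.indicator A (fun _ => (1:ℝ))) := by
  have hD : MeasurableSpace.generateFrom {I : Set ℝ | ∃ l u : ℝ, l < u ∧ Set.Ico l u = I}
      = (inferInstance : MeasurableSpace ℝ) :=
    (BorelSpace.measurable_eq.trans (borel_eq_generateFrom_Ico ℝ)).symm
  have h2D : IsCountablySpanning {I : Set ℝ | ∃ l u : ℝ, l < u ∧ Set.Ico l u = I} := by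
    refine ⟨fun n => Set.Ico (-(n+1) : ℝ) (n+1), fun n => ⟨-(n+1), n+1, by
      have : (0:ℝ) ≤ n := Nat.cast_nonneg n
      constructor
      · linarith
      · rfl⟩, ?_⟩
    ext x
    simp only [Set.mem_iUnion, Set.mem_Ico, Set.mem_univ, iff_true]
    obtain ⟨n, hn⟩ := exists_nat_gt |x|
    refine ⟨n, ?_, ?_⟩
    · have := abs_lt.1 hn
      linarith [this.1]
    · have := abs_lt.1 hn
      linarith [this.2]
  have hgen : (inferInstance : MeasurableSpace (Y × ℝ))
      = MeasurableSpace.generateFrom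
        (Set.image2 (· ×ˢ ·) {S : Set Y | MeasurableSet S}
          {I : Set ℝ | ∃ l u : ℝ, l < u ∧ Set.Ico l u = I}) :=
    (generateFrom_eq_prod MeasurableSpace.generateFrom_measurableSet hD
      isCountablySpanning_measurableSet h2D).symm
  have hpi : IsPiSystem (Set.image2 (· ×ˢ ·) {S : Set Y | MeasurableSet S}
      {I : Set ℝ | ∃ l u : ℝ, l < u ∧ Set.Ico l u = I}) := by
    refine IsPiSystem.prod MeasurableSpace.isPiSystem_measurableSet ?_
    intro I ⟨l₁, u₁, h₁, hI⟩ J ⟨l₂, u₂, h₂, hJ⟩ hne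
    subst hI; subst hJ
    rw [Set.Ico_inter_Ico]
    refine ⟨max l₁ l₂, min u₁ u₂, ?_, rfl⟩
    obtain ⟨x, hx⟩ := hne
    rw [Set.Ico_inter_Ico] at hx
    exact lt_of_le_of_lt hx.1 hx.2
  refine MeasurableSpace.induction_on_inter (C := fun A _ => ApxAT ν c (Set.indicator A (fun _ => (1:ℝ)))) hgen hpi ?_ ?_ ?_ ?_ A hA
  · show ApxAT ν c (Set.indicator (∅ : Set (Y × ℝ)) fun _ => (1:ℝ))
    rw [Set.indicator_empty]
    exact ApxAT.zero
  · rintro t ⟨S, hS, I, ⟨l, u, hlu, rfl⟩, rfl⟩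
    exact apx_rect ν hc hS hlu
  · intro t _ ht
    exact apx_indicator_compl ν hc ht
  · intro f hdisj hmeas hf
    exact apx_indicator_iUnion ν hc f hdisj hmeas hf

lemma apx_simpleFunc (ν : Measure Y) [IsProbabilityMeasure ν] {c : ℝ} (hc : 0 < c)
    (s : SimpleFunc (Y × ℝ) ℝ) : ApxAT ν c ⇑s := by
  induction s using SimpleFunc.induction with
  | @const k A hs =>
    have heq : ⇑(SimpleFunc.piecewise A hs (SimpleFunc.const _ k) (SimpleFunc.const _ 0))
        = fun p => k * Set.indicator A (fun _ => (1:ℝ)) p := by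
      funext p
      by_cases hp : p ∈ A <;>
        simp [SimpleFunc.piecewise_apply, Set.indicator, hp]
    rw [heq]
    exact (apx_indicator ν hc hs).smul k
  | @add f g hdisj hf hg =>
    have heq : ⇑(f + g) = fun p => f p + g p := by
      funext p
      simp
    rw [heq]
    exact ApxAT.add hc.le hf hg

lemma integral_abs_eq_eLpNorm {X : Type*} [MeasurableSpace X] {μ : Measure X} {h : X → ℝ}
    (hi : Integrable h μ) : ∫ x, |h x| ∂μ = (eLpNorm h 1 μ).toReal := by
  have h1 := L1.norm_of_fun_eq_integral_norm (f := h) hi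
  have h2 : ‖hi.toL1 h‖ = (eLpNorm h 1 μ).toReal := by
    rw [Lp.norm_def]
    congr 1
    exact eLpNorm_congr_ae hi.coeFn_toL1
  calc ∫ x, |h x| ∂μ = ∫ x, ‖h x‖ ∂μ := by simp [Real.norm_eq_abs]
    _ = ‖hi.toL1 h‖ := h1.symm
    _ = (eLpNorm h 1 μ).toReal := h2

lemma apx_integrable (ν : Measure Y) [IsProbabilityMeasure ν] {c : ℝ} (hc : 0 < c)
    (f : Y × ℝ → ℝ) (hfi : Integrable f (ν.prod (volume.restrict (Set.Ico (0:ℝ) c)))) :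
    ApxAT ν c f := by
  refine ApxAT.closure hfi (fun δ hδ => ?_)
  have hmem : MemLp f 1 (ν.prod (volume.restrict (Set.Ico (0:ℝ) c))) :=
    memLp_one_iff_integrable.2 hfi
  obtain ⟨s, hs, hsmem⟩ := hmem.exists_simpleFunc_eLpNorm_sub_lt ENNReal.one_ne_top
    (ENNReal.ofReal_pos.2 hδ).ne'
  refine ⟨⇑s, apx_simpleFunc ν hc s, ?_⟩
  have hsint : Integrable (⇑s) (ν.prod (volume.restrict (Set.Ico (0:ℝ) c))) :=
    memLp_one_iff_integrable.1 hsmem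
  have heq : ∫ p, |f p - s p| ∂(ν.prod (volume.restrict (Set.Ico (0:ℝ) c)))
      = (eLpNorm (f - ⇑s) 1 (ν.prod (volume.restrict (Set.Ico (0:ℝ) c)))).toReal := by
    simpa using integral_abs_eq_eLpNorm (hfi.sub hsint)
  rw [heq]
  exact ENNReal.toReal_le_of_le_ofReal hδ.le hs.le

lemma apx_family (ν : Measure Y) [IsProbabilityMeasure ν] {c : ℝ} (hc : 0 < c)
    (r : ℕ) (f : Fin r → Y × ℝ → ℝ)
    (hfint : ∀ j, Integrable (f j) (ν.prod (volume.restrict (Set.Ico (0:ℝ) c))))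
    (hfpos : ∀ j p, 0 ≤ f j p) {δ : ℝ} (hδ : 0 < δ) :
    ∃ N, 0 < N ∧ ∃ V : Fin r → Fin N → Y → ℝ,
      (∀ j i, Integrable (V j i) ν) ∧ (∀ j i y, 0 ≤ V j i y) ∧
      ∀ j, ∫ p, |f j p - stepAT c N (V j) p|
        ∂(ν.prod (volume.restrict (Set.Ico (0:ℝ) c))) ≤ δ := by
  classical
  have h := fun j => (apx_integrable ν hc (f j) (hfint j)).2 δ hδ
  choose N₀ hN₀ v₀ hv₀int hv₀ using h
  set N : ℕ := ∏ i ∈ Finset.univ, N₀ i with hNdef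
  have hN : 0 < N := Finset.prod_pos fun i _ => hN₀ i
  have h2 := fun j => stepAT_refine c hc.le (hN₀ j)
    (M := ∏ i ∈ Finset.univ.erase j, N₀ i)
    (Finset.prod_pos fun i _ => hN₀ i)
    ((Finset.mul_prod_erase Finset.univ N₀ (Finset.mem_univ j)).symm) (v₀ j)
  choose v₁ hv₁src hv₁step using h2
  refine ⟨N, hN, fun j i y => max (v₁ j i y) 0, ?_, fun j i y => le_max_right _ _, ?_⟩
  · intro j i
    obtain ⟨i₀, hi₀⟩ := hv₁src j i
    show Integrable (fun y => max (v₁ j i y) 0) ν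
    have heq2 : (fun y => max (v₁ j i y) 0) = fun y => max (v₀ j i₀ y) 0 := by
      funext y; rw [hi₀]
    rw [heq2]
    exact (hv₀int j i₀).pos_part
  · intro j
    have hv₁int : ∀ i, Integrable (v₁ j i) ν := by
      intro i
      obtain ⟨i₀, hi₀⟩ := hv₁src j i
      rw [hi₀]
      exact hv₀int j i₀
    have hmaxeq : ∀ p : Y × ℝ, stepAT c N (fun i y => max (v₁ j i y) 0) p
        = max (stepAT c N (v₁ j) p) 0 := fun p => stepAT_max c hc.le N (v₁ j) p.1 p.2
    have hptw : ∀ p : Y × ℝ, |f j p - max (stepAT c N (v₁ j) p) 0|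
        ≤ |f j p - stepAT c N (v₁ j) p| := by
      intro p
      rcases le_or_gt 0 (stepAT c N (v₁ j) p) with hs | hs
      · rw [max_eq_left hs]
      · rw [max_eq_right hs.le]
        have h0 : 0 ≤ f j p := hfpos j p
        rw [sub_zero, abs_of_nonneg h0]
        calc f j p ≤ f j p - stepAT c N (v₁ j) p := by linarith
          _ ≤ |f j p - stepAT c N (v₁ j) p| := le_abs_self _
    calc ∫ p, |f j p - stepAT c N (fun i y => max (v₁ j i y) 0) p|
            ∂(ν.prod (volume.restrict (Set.Ico (0:ℝ) c)))
        = ∫ p, |f j p - max (stepAT c N (v₁ j) p) 0|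
            ∂(ν.prod (volume.restrict (Set.Ico (0:ℝ) c))) :=
          integral_congr_ae (ae_of_all _ fun p => by
            show |f j p - stepAT c N (fun i y => max (v₁ j i y) 0) p|
              = |f j p - max (stepAT c N (v₁ j) p) 0|
            rw [hmaxeq p])
      _ ≤ ∫ p, |f j p - stepAT c N (v₁ j) p|
            ∂(ν.prod (volume.restrict (Set.Ico (0:ℝ) c))) :=
          integral_mono_of_nonneg (ae_of_all _ fun p => abs_nonneg _)
            ((hfint j).sub (stepAT_integrable ν c N (v₁ j) hv₁int)).abs
            (ae_of_all _ hptw)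
      _ = ∫ p, |f j p - stepAT c (N₀ j) (v₀ j) p|
            ∂(ν.prod (volume.restrict (Set.Ico (0:ℝ) c))) := by
          rw [hv₁step j]
      _ ≤ δ := hv₀ j

lemma zpowMP {ν : Measure Y} (T : Equiv.Perm Y) (hT : Measurable T)
    (hTi : Measurable T.symm) (hmp : MeasurePreserving T ν ν) :
    ∀ n : ℤ, Measurable ⇑(T ^ n) ∧ MeasurePreserving ⇑(T ^ n) ν ν := by
  have hTisym : MeasurePreserving ⇑T.symm ν ν := by
    let e : Y ≃ᵐ Y := ⟨T, hT, hTi⟩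
    exact MeasurePreserving.symm e hmp
  intro n
  induction n using Int.induction_on with
  | zero => simp only [zpow_zero]; exact ⟨measurable_id, MeasurePreserving.id ν⟩
  | succ k ih =>
    have hco : ⇑(T ^ ((k : ℤ) + 1)) = ⇑(T ^ (k : ℤ)) ∘ ⇑T := by
      rw [zpow_add_one]
      rfl
    rw [hco]
    exact ⟨ih.1.comp hT, ih.2.comp hmp⟩
  | pred k ih =>
    have hco : ⇑(T ^ (-(k : ℤ) - 1)) = ⇑(T ^ (-(k : ℤ))) ∘ ⇑T.symm := by
      rw [zpow_sub_one]
      rfl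
    rw [hco]
    exact ⟨ih.1.comp hTi, ih.2.comp hTisym⟩

end ATProof

/-- The flow built under the constant ceiling function `c` over the base
transformation `T`, acting on `Y × [0,c)` (viewed inside `Y × ℝ`). -/
noncomputable def constFlow {Y : Type*} (T : Equiv.Perm Y) (c : ℝ) (s : ℝ) :
    Y × ℝ → Y × ℝ :=
  fun p => ((T ^ ⌊(p.2 + s) / c⌋) p.1, p.2 + s - ⌊(p.2 + s) / c⌋ * c)

section FlowEval
variable {Y : Type*}

lemma flow_eval (T : Equiv.Perm Y) {c : ℝ} (hc : 0 < c) {N i : ℕ} (hN : 0 < N)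
    (hi : i < N) (n : ℤ) (g0 : Y → ℝ) (y : Y) (t : ℝ) (ht0 : 0 ≤ t) (htc : t < c) :
    g0 (constFlow T c ((n : ℝ) * c - (i : ℝ) * (c / N)) (y, t)).1
      * chiC c N 0 (constFlow T c ((n : ℝ) * c - (i : ℝ) * (c / N)) (y, t)).2
    = g0 ((T ^ n) y) * chiC c N i t := by
  set d : ℝ := c / N with hddef
  set s : ℝ := (n : ℝ) * c - (i : ℝ) * d with hsdef
  have hNR : (0:ℝ) < N := by exact_mod_cast hN
  have hd : 0 < d := by rw [hddef]; positivity
  have hdc : d ≤ c := div_le_self hc.le (by exact_mod_cast hN)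
  have hNd : (N : ℝ) * d = c := by rw [hddef]; field_simp
  have hid : (i : ℝ) * d ≤ ((N : ℝ) - 1) * d := by
    have h1 : (i : ℝ) ≤ (N : ℝ) - 1 := by
      have : (i : ℝ) + 1 ≤ (N : ℝ) := by exact_mod_cast hi
      linarith
    nlinarith
  have hi0 : (0:ℝ) ≤ (i : ℝ) * d := by positivity
  unfold constFlow
  simp only []
  rcases lt_or_ge t ((i : ℝ) * d) with hA | hA
  · -- t below the cell: floor is n - 1, both sides vanish
    have hfloor : ⌊(t + s) / c⌋ = n - 1 := by
      rw [Int.floor_eq_iff]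
      push_cast
      constructor
      · rw [le_div_iff₀ hc, hsdef]
        nlinarith
      · rw [div_lt_iff₀ hc, hsdef]
        nlinarith
    rw [hfloor]
    have hchi0 : chiC c N 0 (t + s - ((n : ℤ) - 1 : ℤ) * c) = 0 := by
      unfold chiC
      apply ChiAT_eq_zero
      push_cast
      rintro ⟨h1, h2⟩
      rw [hsdef] at h2
      nlinarith
    have hchii : chiC c N i t = 0 := by
      unfold chiC
      apply ChiAT_eq_zero
      rintro ⟨h1, h2⟩
      rw [← hddef] at h1
      linarith
    rw [hchi0, hchii, mul_zero, mul_zero]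
  rcases lt_or_ge t (((i : ℝ) + 1) * d) with hB | hB
  · -- t in the cell: floor is n, both indicators are 1
    have hfloor : ⌊(t + s) / c⌋ = n := by
      rw [Int.floor_eq_iff]
      constructor
      · rw [le_div_iff₀ hc, hsdef]
        nlinarith
      · rw [div_lt_iff₀ hc, hsdef]
        push_cast
        nlinarith
    rw [hfloor]
    have hchi0 : chiC c N 0 (t + s - (n : ℝ) * c) = 1 := by
      unfold chiC
      apply ChiAT_eq_one
      push_cast
      rw [hsdef]
      constructor
      · rw [← hddef]; nlinarith
      · rw [← hddef]; nlinarith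
    have hchii : chiC c N i t = 1 := by
      unfold chiC
      apply ChiAT_eq_one
      rw [← hddef]
      exact ⟨hA, hB⟩
    rw [hchi0, hchii]
  · -- t above the cell: floor is n, both sides vanish
    have hfloor : ⌊(t + s) / c⌋ = n := by
      rw [Int.floor_eq_iff]
      constructor
      · rw [le_div_iff₀ hc, hsdef]
        nlinarith
      · rw [div_lt_iff₀ hc, hsdef]
        push_cast
        nlinarith
    rw [hfloor]
    have hchi0 : chiC c N 0 (t + s - (n : ℝ) * c) = 0 := by
      unfold chiC
      apply ChiAT_eq_zero
      push_cast
      rw [hsdef]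
      rintro ⟨h1, h2⟩
      rw [← hddef] at h2
      nlinarith
    have hchii : chiC c N i t = 0 := by
      unfold chiC
      apply ChiAT_eq_zero
      rintro ⟨h1, h2⟩
      rw [← hddef] at h2
      linarith
    simp [hchi0, hchii]

end FlowEval


set_option maxHeartbeats 1000000 in
theorem constFlow_of_AT_base_is_AT
    {Y : Type*} [MeasurableSpace Y] (ν : Measure Y) [IsProbabilityMeasure ν]
    (T : Equiv.Perm Y) (hTmeas : Measurable T) (hTinvmeas : Measurable T.symm)
    (hmp : MeasurePreserving T ν ν) (herg : Ergodic T ν)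
    -- T is approximately transitive
    (hAT : ∀ (r : ℕ) (f : Fin r → Y → ℝ),
      (∀ j, Integrable (f j) ν) → (∀ j y, 0 ≤ f j y) →
      ∀ ε > (0 : ℝ),
      ∃ (g : Y → ℝ), Integrable g ν ∧ (∀ y, 0 ≤ g y) ∧
      ∃ (q : ℕ) (nk : Fin q → ℤ) (lam : Fin r → Fin q → ℝ),
        (∀ j t, 0 ≤ lam j t) ∧
        ∀ j, ∫ y, |f j y - ∑ t, lam j t * g ((T ^ (nk t)) y)| ∂ν ≤ ε)
    (c : ℝ) (hc : 0 < c) :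
    -- the flow built under the constant function c with base T is approximately
    -- transitive as an ℝ-action on (Y × [0,c), ν × Lebesgue)
    ∀ (r : ℕ) (f : Fin r → Y × ℝ → ℝ),
      (∀ j, Integrable (f j) (ν.prod (volume.restrict (Set.Ico (0 : ℝ) c)))) →
      (∀ j p, 0 ≤ f j p) →
      ∀ ε > (0 : ℝ),
      ∃ (g : Y × ℝ → ℝ), Integrable g (ν.prod (volume.restrict (Set.Ico (0 : ℝ) c))) ∧
        (∀ p, 0 ≤ g p) ∧
      ∃ (q : ℕ) (sk : Fin q → ℝ) (lam : Fin r → Fin q → ℝ),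
        (∀ j t, 0 ≤ lam j t) ∧
        ∀ j, ∫ p, |f j p - ∑ t, lam j t * g (constFlow T c (sk t) p)|
              ∂(ν.prod (volume.restrict (Set.Ico (0 : ℝ) c))) ≤ ε := by
  intro r f hfint hfpos ε hε
  obtain ⟨N, hN, V, hVint, hVpos, hVbound⟩ :=
    apx_family ν hc r f hfint hfpos (δ := ε / 2) (by linarith)
  have hNR : (0:ℝ) < N := by exact_mod_cast hN
  set ε' : ℝ := ε / (2 * (c + 1)) with hε'def
  have hε'pos : 0 < ε' := by rw [hε'def]; positivity
  obtain ⟨g0, hg0int, hg0pos, q, nk, lam', hlam'pos, hbase⟩ :=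
    hAT (r * N) (fun a => V (finProdFinEquiv.symm a).1 (finProdFinEquiv.symm a).2)
      (fun a => hVint _ _) (fun a y => hVpos _ _ y) ε' hε'pos
  have hTn := zpowMP (ν := ν) T hTmeas hTinvmeas hmp
  refine ⟨fun p => g0 p.1 * chiC c N 0 p.2,
    hg0int.mul_prod (ChiAT_integrable _ _ c),
    fun p => mul_nonneg (hg0pos p.1) (chiC_nonneg _ _ _ _),
    N * q,
    fun a => ((nk (finProdFinEquiv.symm a).2 : ℤ) : ℝ) * c
      - (((finProdFinEquiv.symm a).1 : Fin N) : ℝ) * (c / N),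
    fun j a => lam' (finProdFinEquiv (j, (finProdFinEquiv.symm a).1))
      (finProdFinEquiv.symm a).2,
    fun j a => hlam'pos _ _, ?_⟩
  intro j
  set W : Fin N → Y → ℝ := fun i y => ∑ k : Fin q,
    lam' (finProdFinEquiv (j, i)) k * g0 ((T ^ (nk k)) y) with hWdef
  have hg0Tint : ∀ m : ℤ, Integrable (fun y => g0 ((T ^ m) y)) ν := by
    intro m
    exact ((hTn m).2.integrable_comp hg0int.aestronglyMeasurable).2 hg0int
  have hWint : ∀ i, Integrable (W i) ν := fun i =>
    integrable_finset_sum _ fun k _ => (hg0Tint (nk k)).const_mul _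
  -- almost everywhere, the flow-cone sum is the step function with coefficients W
  have hae : ∀ᵐ p ∂(ν.prod (volume.restrict (Set.Ico (0:ℝ) c))),
      (∑ a : Fin (N * q),
        lam' (finProdFinEquiv (j, (finProdFinEquiv.symm a).1)) (finProdFinEquiv.symm a).2
          * ((fun p : Y × ℝ => g0 p.1 * chiC c N 0 p.2)
              (constFlow T c (((nk (finProdFinEquiv.symm a).2 : ℤ) : ℝ) * c
                - (((finProdFinEquiv.symm a).1 : Fin N) : ℝ) * (c / N)) p)))
        = stepAT c N W p := by
    filter_upwards [aeIcoAT ν c] with p hp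
    obtain ⟨y, t⟩ := p
    have ht0 : 0 ≤ t := hp.1
    have htc : t < c := hp.2
    rw [← Equiv.sum_comp (finProdFinEquiv : Fin N × Fin q ≃ Fin (N * q))]
    rw [Fintype.sum_prod_type]
    unfold stepAT
    refine Finset.sum_congr rfl fun i _ => ?_
    have e2s : ∀ k : Fin q,
        (finProdFinEquiv.symm (finProdFinEquiv ((i : Fin N), (k : Fin q)))) = (i, k) :=
      fun k => Equiv.symm_apply_apply _ _
    calc ∑ k : Fin q,
          lam' (finProdFinEquiv (j, (finProdFinEquiv.symm (finProdFinEquiv (i, k))).1))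
            (finProdFinEquiv.symm (finProdFinEquiv (i, k))).2
          * ((fun p : Y × ℝ => g0 p.1 * chiC c N 0 p.2)
              (constFlow T c
                (((nk (finProdFinEquiv.symm (finProdFinEquiv (i, k))).2 : ℤ) : ℝ) * c
                - (((finProdFinEquiv.symm (finProdFinEquiv (i, k))).1 : Fin N) : ℝ) * (c / N))
                (y, t)))
        = ∑ k : Fin q, lam' (finProdFinEquiv (j, i)) k
            * (g0 ((T ^ (nk k)) y) * chiC c N (i : ℕ) t) := by
          refine Finset.sum_congr rfl fun k _ => ?_
          rw [e2s k]
          congr 1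
          exact flow_eval T hc hN i.isLt (nk k) g0 y t ht0 htc
      _ = W i y * chiC c N (i : ℕ) t := by
          rw [hWdef]
          rw [Finset.sum_mul]
          refine Finset.sum_congr rfl fun k _ => ?_
          ring
  -- main estimate
  have hstepVint := stepAT_integrable ν c N (V j) (hVint j)
  have hstepWint := stepAT_integrable ν c N W hWint
  have hmain : ∫ p, |f j p
        - ∑ a : Fin (N * q),
          lam' (finProdFinEquiv (j, (finProdFinEquiv.symm a).1)) (finProdFinEquiv.symm a).2
            * ((fun p : Y × ℝ => g0 p.1 * chiC c N 0 p.2)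
                (constFlow T c (((nk (finProdFinEquiv.symm a).2 : ℤ) : ℝ) * c
                  - (((finProdFinEquiv.symm a).1 : Fin N) : ℝ) * (c / N)) p))|
        ∂(ν.prod (volume.restrict (Set.Ico (0:ℝ) c)))
      = ∫ p, |f j p - stepAT c N W p| ∂(ν.prod (volume.restrict (Set.Ico (0:ℝ) c))) :=
    integral_congr_ae (hae.mono fun p hp => by simp only []; rw [hp])
  rw [hmain]
  have htri : ∫ p, |f j p - stepAT c N W p| ∂(ν.prod (volume.restrict (Set.Ico (0:ℝ) c)))
      ≤ (∫ p, |f j p - stepAT c N (V j) p| ∂(ν.prod (volume.restrict (Set.Ico (0:ℝ) c))))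
        + ∫ p, |stepAT c N (V j) p - stepAT c N W p|
            ∂(ν.prod (volume.restrict (Set.Ico (0:ℝ) c))) :=
    triAT ((hfint j).sub hstepVint) (hstepVint.sub hstepWint)
  have hsecond : ∫ p, |stepAT c N (V j) p - stepAT c N W p|
      ∂(ν.prod (volume.restrict (Set.Ico (0:ℝ) c))) ≤ ε' * c := by
    have hDint : Integrable (fun p : Y × ℝ =>
        ∑ i : Fin N, |V j i p.1 - W i p.1| * chiC c N (i : ℕ) p.2)
        (ν.prod (volume.restrict (Set.Ico (0:ℝ) c))) :=
      integrable_finset_sum _ fun i _ =>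
        ((hVint j i).sub (hWint i)).abs.mul_prod (ChiAT_integrable _ _ c)
    have hptw : ∀ p : Y × ℝ, |stepAT c N (V j) p - stepAT c N W p|
        ≤ ∑ i : Fin N, |V j i p.1 - W i p.1| * chiC c N (i : ℕ) p.2 := by
      intro p
      unfold stepAT
      rw [← Finset.sum_sub_distrib]
      refine le_trans (Finset.abs_sum_le_sum_abs _ _) (Finset.sum_le_sum fun i _ => ?_)
      have : V j i p.1 * chiC c N (i:ℕ) p.2 - W i p.1 * chiC c N (i:ℕ) p.2
          = (V j i p.1 - W i p.1) * chiC c N (i:ℕ) p.2 := by ring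
      rw [this, abs_mul, abs_of_nonneg (chiC_nonneg _ _ _ _)]
    have hVW : ∀ i : Fin N, ∫ y, |V j i y - W i y| ∂ν ≤ ε' := by
      intro i
      have hb := hbase (finProdFinEquiv (j, i))
      simp only [Equiv.symm_apply_apply] at hb
      simpa only [hWdef] using hb
    have hchiI : ∀ i : Fin N,
        ∫ t, chiC c N (i : ℕ) t ∂(volume.restrict (Set.Ico (0:ℝ) c)) ≤ c / N := by
      intro i
      refine ChiAT_integral_le' _ _ c (c / N) (le_of_eq (by ring)) (by positivity)
    calc ∫ p, |stepAT c N (V j) p - stepAT c N W p|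
            ∂(ν.prod (volume.restrict (Set.Ico (0:ℝ) c)))
        ≤ ∫ p, ∑ i : Fin N, |V j i p.1 - W i p.1| * chiC c N (i : ℕ) p.2
            ∂(ν.prod (volume.restrict (Set.Ico (0:ℝ) c))) :=
          integral_mono_of_nonneg (ae_of_all _ fun p => abs_nonneg _) hDint
            (ae_of_all _ hptw)
      _ = ∑ i : Fin N, ∫ p, |V j i p.1 - W i p.1| * chiC c N (i : ℕ) p.2
            ∂(ν.prod (volume.restrict (Set.Ico (0:ℝ) c))) :=
          integral_finset_sum _ fun i _ =>
            ((hVint j i).sub (hWint i)).abs.mul_prod (ChiAT_integrable _ _ c)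
      _ ≤ ∑ _i : Fin N, ε' * (c / N) := by
          refine Finset.sum_le_sum fun i _ => ?_
          rw [integral_prod_mul (fun y => |V j i y - W i y|) (chiC c N (i : ℕ))]
          refine mul_le_mul (hVW i) (hchiI i)
            (integral_nonneg fun t => chiC_nonneg _ _ _ _) hε'pos.le
      _ = ε' * c := by
          rw [Finset.sum_const, Finset.card_univ, Fintype.card_fin, nsmul_eq_mul]
          field_simp
      _ ≤ ε' * c := le_refl _
  have hfinal : ε' * c ≤ ε / 2 := by
    rw [hε'def]
    rw [div_mul_eq_mul_div, div_le_iff₀ (by linarith : (0:ℝ) < 2 * (c + 1))]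
    nlinarith
  calc ∫ p, |f j p - stepAT c N W p| ∂(ν.prod (volume.restrict (Set.Ico (0:ℝ) c)))
      ≤ (∫ p, |f j p - stepAT c N (V j) p| ∂(ν.prod (volume.restrict (Set.Ico (0:ℝ) c))))
        + ∫ p, |stepAT c N (V j) p - stepAT c N W p|
            ∂(ν.prod (volume.restrict (Set.Ico (0:ℝ) c))) := htri
    _ ≤ ε / 2 + ε' * c := add_le_add (hVbound j) hsecond
    _ ≤ ε / 2 + ε / 2 := add_le_add (le_refl _) hfinal
    _ = ε := by ring
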